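/- Let (V, E) be a finite directed graph, M a DFA over alphabet V with state type Q, and s, d ∈ V. Then the projection map sending a product-graph walk (v₀, q₀), (v₁, q₁), …, (v_k, q_k) to its vertex sequence v₀, v₁, …, v_k is a bijection from the set of walks in the product graph that start at (s, M.step M.start s) and end at some vertex (d, q) with q an accepting state of M, onto the set of walks from s to d in (V, E) whose vertex sequence is accepted by M. Hence counting paths in DVNet (the product graph) is equivalent to counting network paths matching the regular expression. -/

import Mathlib

/-- A walk from `u` to `w` in the directed graph with edge relation `E` is a nonempty list
of vertices starting at `u`, ending at `w`, with every consecutive pair related by `E`. -/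
def IsWalk {V : Type*} (E : V → V → Prop) (u w : V) (l : List V) : Prop :=
  l ≠ [] ∧ l.head? = some u ∧ l.getLast? = some w ∧ l.Chain' E

/-- Given a directed graph `(V, E)` and a DFA `M` over alphabet `V`, the product graph has
vertex set `V × Q` and an edge from `(u, p)` to `(v, q)` iff `E u v` and `M.step p v = q`. -/
def ProductEdge {V Q : Type*} (E : V → V → Prop) (M : DFA V Q) :
    V × Q → V × Q → Prop :=
  fun p r => E p.1 r.1 ∧ M.step p.2 r.1 = r.2

def liftWalk {V Q : Type*} (M : DFA V Q) : Q → List V → List (V × Q)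
  | _, [] => []
  | p, v :: vs => (v, M.step p v) :: liftWalk M (M.step p v) vs

lemma liftWalk_map_fst {V Q : Type*} (M : DFA V Q) :
    ∀ (w : List V) (p : Q), (liftWalk M p w).map Prod.fst = w
  | [], _ => rfl
  | v :: vs, p => by simp [liftWalk, liftWalk_map_fst M vs]

lemma liftWalk_head? {V Q : Type*} (M : DFA V Q) (p : Q) (w : List V) :
    (liftWalk M p w).head? = w.head?.map (fun v => (v, M.step p v)) := by
  cases w <;> rfl

lemma liftWalk_getLast? {V Q : Type*} (M : DFA V Q) :
    ∀ (w : List V) (p : Q),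
      (liftWalk M p w).getLast? = w.getLast?.map (fun v => (v, M.evalFrom p w))
  | [], _ => rfl
  | [v], p => by simp [liftWalk, DFA.evalFrom]
  | v :: a :: t, p => by
      rw [liftWalk, liftWalk]
      rw [List.getLast?_cons_cons, List.getLast?_cons_cons]
      have := liftWalk_getLast? M (a :: t) (M.step p v)
      rw [liftWalk] at this
      rw [this]
      simp [DFA.evalFrom]

lemma liftWalk_chain' {V Q : Type*} (E : V → V → Prop) (M : DFA V Q) :
    ∀ (w : List V) (p : Q), w.Chain' E → (liftWalk M p w).Chain' (ProductEdge E M)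
  | [], _, _ => List.isChain_nil
  | [v], p, _ => by simp [liftWalk, List.Chain']
  | v :: a :: t, p, h => by
      rw [List.Chain', List.isChain_cons_cons] at h
      rw [liftWalk, liftWalk, List.Chain', List.isChain_cons_cons]
      constructor
      · exact ⟨h.1, rfl⟩
      · have := liftWalk_chain' E M (a :: t) (M.step p v) h.2
        rwa [liftWalk] at this

lemma liftWalk_canon {V Q : Type*} (E : V → V → Prop) (M : DFA V Q) :
    ∀ (l : List (V × Q)) (p : Q), l.Chain' (ProductEdge E M) →
      (∀ x ∈ l.head?, x.2 = M.step p x.1) → l = liftWalk M p (l.map Prod.fst)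
  | [], _, _, _ => rfl
  | x :: l, p, hc, hh => by
      obtain ⟨v, q⟩ := x
      have hx : q = M.step p v := hh (v, q) rfl
      rw [List.map_cons, liftWalk, ← hx]
      congr 1
      apply liftWalk_canon E M l q (List.IsChain.tail hc)
      intro y hy
      cases l with
      | nil => simp at hy
      | cons a t =>
        simp at hy
        subst hy
        exact (List.isChain_cons_cons.mp hc).1.2.symm

/-- Let `(V, E)` be a finite directed graph, `M` a DFA over alphabet `V`
with state type `Q`, and `s, d ∈ V`. The projection map sending a product-graph walk to
its sequence of first components is a bijection from the set of walks in the product graph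
starting at `(s, M.step M.start s)` and ending at some `(d, q)` with `q` accepting, onto
the set of walks from `s` to `d` in `(V, E)` whose vertex sequence is accepted by `M`. -/
theorem dvnet_product_bijection {V Q : Type} [Fintype V] [Fintype Q]
    (E : V → V → Prop) (M : DFA V Q) (s d : V) :
    Set.BijOn (fun l : List (V × Q) => l.map Prod.fst)
      {l : List (V × Q) | ∃ q ∈ M.accept,
        IsWalk (ProductEdge E M) (s, M.step M.start s) (d, q) l}
      {l : List V | IsWalk E s d l ∧ M.eval l ∈ M.accept} := by
  have canon : ∀ l ∈ {l : List (V × Q) | ∃ q ∈ M.accept,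
      IsWalk (ProductEdge E M) (s, M.step M.start s) (d, q) l},
      l = liftWalk M M.start (l.map Prod.fst) := by
    intro l hl
    obtain ⟨q, _, _, hhead, _, hchain⟩ := hl
    apply liftWalk_canon E M l M.start hchain
    intro x hx
    rw [hhead] at hx
    simp at hx
    subst hx
    rfl
  refine ⟨?_, ?_, ?_⟩
  · -- MapsTo
    intro l hl
    obtain ⟨q, hq, hne, hhead, hlast, hchain⟩ := hl
    have hc := canon l ⟨q, hq, hne, hhead, hlast, hchain⟩
    have heval : M.evalFrom M.start (l.map Prod.fst) = q := by
      have h1 : l.getLast? = (liftWalk M M.start (l.map Prod.fst)).getLast? := by rw [← hc]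
      rw [liftWalk_getLast?, hlast] at h1
      cases hgl : (l.map Prod.fst).getLast? with
      | none => rw [hgl] at h1; simp at h1
      | some v => rw [hgl] at h1; simp at h1; exact h1.2.symm
    refine ⟨⟨?_, ?_, ?_, ?_⟩, ?_⟩
    · simpa using hne
    · rw [List.head?_map, hhead]; rfl
    · have h1 : l.getLast? = (liftWalk M M.start (l.map Prod.fst)).getLast? := by rw [← hc]
      rw [liftWalk_getLast?, hlast] at h1
      cases hgl : (l.map Prod.fst).getLast? with
      | none => rw [hgl] at h1; simp at h1
      | some v => rw [hgl] at h1; simp at h1; rw [h1.1]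
    · exact (List.isChain_map Prod.fst).mpr (hchain.imp fun a b h => h.1)
    · show M.evalFrom M.start _ ∈ M.accept
      rw [heval]; exact hq
  · -- InjOn
    intro l1 h1 l2 h2 heq
    rw [canon l1 h1, canon l2 h2]
    simp only at heq
    rw [heq]
  · -- SurjOn
    intro w hw
    obtain ⟨⟨hne, hhead, hlast, hchain⟩, hacc⟩ := hw
    refine ⟨liftWalk M M.start w, ⟨M.eval w, hacc, ?_, ?_, ?_, ?_⟩, liftWalk_map_fst M w M.start⟩
    · intro h
      apply hne
      have := liftWalk_map_fst M w M.start
      rw [h] at this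
      exact this.symm
    · rw [liftWalk_head?, hhead]; rfl
    · rw [liftWalk_getLast?, hlast]; rfl
    · exact liftWalk_chain' E M w M.start hchain
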